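/- If G is a γtg-critical graph and v is any vertex of G, then no neighbor of v is an optimal first move of Dominator in the Dominator-start game on G|v. -/

import Mathlib

open scoped Classical

/-- The value of the total domination game on `G` with the set `D` of vertices
already totally dominated; `dTurn = true` means Dominator (minimizer) to move,
`dTurn = false` means Staller (maximizer) to move. Each move must be a vertex
totally dominating at least one vertex not in `D`; the value is the number of
moves played until no legal move remains, under optimal play. -/
noncomputable def tgVal {V : Type*} [Fintype V] (G : SimpleGraph V)
    (dTurn : Bool) (D : Finset V) : ℕ :=
  if h : (Finset.univ.filter fun v => ∃ u, G.Adj v u ∧ u ∉ D).Nonempty then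
    1 + (if dTurn then
          ((Finset.univ.filter fun v => ∃ u, G.Adj v u ∧ u ∉ D).attach).inf'
            (Finset.attach_nonempty_iff.mpr h)
            (fun v => tgVal G false (D ∪ G.neighborFinset v.1))
        else
          ((Finset.univ.filter fun v => ∃ u, G.Adj v u ∧ u ∉ D).attach).sup'
            (Finset.attach_nonempty_iff.mpr h)
            (fun v => tgVal G true (D ∪ G.neighborFinset v.1)))
  else 0
termination_by (Finset.univ \ D).card
decreasing_by
  all_goals
  · obtain ⟨v, hv⟩ := v
    simp only [Finset.mem_filter, Finset.mem_univ, true_and] at hv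
    obtain ⟨u, hadj, hu⟩ := hv
    apply Finset.card_lt_card
    rw [Finset.ssubset_iff_of_subset
      (Finset.sdiff_subset_sdiff (subset_refl _) Finset.subset_union_left)]
    exact ⟨u, by simp [hu], by simp [hadj]⟩

/-- The game total domination number (Dominator starts). -/
noncomputable def gammaTG {V : Type*} [Fintype V] (G : SimpleGraph V) : ℕ :=
  tgVal G true ∅

/-- The Staller-start game total domination number. -/
noncomputable def gammaTG' {V : Type*} [Fintype V] (G : SimpleGraph V) : ℕ :=
  tgVal G false ∅

/-- The game total domination number of `G|S` (vertices of `S` already totally dominated). -/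
noncomputable def gammaTGSub {V : Type*} [Fintype V] (G : SimpleGraph V) (S : Finset V) : ℕ :=
  tgVal G true S

/-- `G` is total domination game critical. -/
def IsTGCritical {V : Type*} [Fintype V] (G : SimpleGraph V) : Prop :=
  ∀ v : V, gammaTGSub G {v} < gammaTG G

/-- `G` is `k`-`γtg`-critical. -/
def IsKTGCritical {V : Type*} [Fintype V] (k : ℕ) (G : SimpleGraph V) : Prop :=
  gammaTG G = k ∧ IsTGCritical G

theorem stmt10 {V : Type*} [Fintype V] (G : SimpleGraph V) (hcrit : IsTGCritical G)
    (v d₁ : V)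
    (hlegal : ∃ u, G.Adj d₁ u ∧ u ∉ ({v} : Finset V))
    (hopt : gammaTGSub G {v} = 1 + tgVal G false ({v} ∪ G.neighborFinset d₁)) :
    ¬ G.Adj v d₁ := by
  intro hadj
  have hv : v ∈ G.neighborFinset d₁ := by
    simp [SimpleGraph.mem_neighborFinset, hadj.symm]
  have hset : (∅ : Finset V) ∪ G.neighborFinset d₁ = {v} ∪ G.neighborFinset d₁ := by
    ext x
    simp only [Finset.mem_union, Finset.mem_singleton, Finset.notMem_empty, false_or]
    constructor
    · tauto
    · rintro (rfl | h)
      · exact hv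
      · exact h
  have hmem : d₁ ∈ Finset.univ.filter fun w => ∃ u, G.Adj w u ∧ u ∉ (∅ : Finset V) := by
    simp only [Finset.mem_filter, Finset.mem_univ, true_and, Finset.notMem_empty,
      not_false_iff, and_true]
    exact ⟨v, hadj.symm⟩
  have hne : (Finset.univ.filter fun w => ∃ u, G.Adj w u ∧ u ∉ (∅ : Finset V)).Nonempty :=
    ⟨d₁, hmem⟩
  have hle : gammaTG G ≤ gammaTGSub G {v} := by
    unfold gammaTG
    rw [tgVal, dif_pos hne, if_pos rfl, hopt]
    apply Nat.add_le_add_left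
    calc _ ≤ tgVal G false (∅ ∪ G.neighborFinset d₁) :=
          Finset.inf'_le _ (Finset.mem_attach _ ⟨d₁, hmem⟩)
      _ = _ := by rw [hset]
  exact absurd (hcrit v) (not_lt.mpr hle)
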